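/- For real z > 0, μ(z) = (1/2)·∑_{n=1}^∞ n/((n+2)(n+1)) · ∑_{k=0}^∞ 1/(z+k+1)^{n+1} (Binet's convergent double series for the Binet function). -/

import Mathlib

open Real Filter Topology Set

noncomputable def binetMu (x : ℝ) : ℝ :=
  Real.log (Real.Gamma x) - (x - 1/2) * Real.log x + x - (1/2) * Real.log (2 * Real.pi)

lemma aux_hasSum {u : ℝ} (hu0 : 0 < u) (hu1 : u < 1) :
    HasSum (fun m : ℕ => (1/2) * (((m:ℝ)+1) / (((m:ℝ)+3) * ((m:ℝ)+2))) * u^(m+2))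
      ((1/u - 1/2) * (-Real.log (1 - u)) - 1) := by
  set L : ℝ := -Real.log (1 - u) with hL
  have hune : u ≠ 0 := hu0.ne'
  have h1 : HasSum (fun n : ℕ => u^(n+1)/((n:ℝ)+1)) L :=
    Real.hasSum_pow_div_log_of_abs_lt_one (by rw [abs_of_pos hu0]; exact hu1)
  have h2 : HasSum (fun n : ℕ => u^(n+2)/((n:ℝ)+2)) (L - u) := by
    have := (hasSum_nat_add_iff' (f := fun n : ℕ => u^(n+1)/((n:ℝ)+1)) 1).2 h1
    simp only [Finset.range_one, Finset.sum_singleton, Nat.cast_zero, zero_add, pow_one,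
      div_one] at this
    convert this using 2 with n
    · rfl
    push_cast; ring_nf
  have h3 : HasSum (fun n : ℕ => u^(n+1)/((n:ℝ)+2)) ((1/u) * (L - u)) := by
    have := h2.mul_left (1/u)
    convert this using 2 with n
    · rfl
    rw [pow_succ]
    field_simp
    ring
  have h4 : HasSum (fun n : ℕ => u^(n+1)/((n:ℝ)+2) - (1/2) * (u^(n+1)/((n:ℝ)+1)))
      ((1/u) * (L - u) - (1/2) * L) := h3.sub (h1.mul_left (1/2))
  have h5 := (hasSum_nat_add_iff' (f := fun n : ℕ =>
      u^(n+1)/((n:ℝ)+2) - (1/2) * (u^(n+1)/((n:ℝ)+1))) 1).2 h4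
  simp only [Finset.range_one, Finset.sum_singleton, Nat.cast_zero, zero_add, pow_one] at h5
  have hval : (1/u) * (L - u) - (1/2) * L - (u / 2 - 1/2 * (u/1))
      = (1/u - 1/2) * L - 1 := by field_simp; ring
  rw [hval] at h5
  convert h5 using 2 with m
  · rfl
  push_cast
  have h3' : ((m:ℝ)+3) ≠ 0 := by positivity
  have h2' : ((m:ℝ)+2) ≠ 0 := by positivity
  field_simp
  ring

lemma binetMu_step {x : ℝ} (hx : 0 < x) :
    binetMu x - binetMu (x+1) = (x + 1/2) * (Real.log (x+1) - Real.log x) - 1 := by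
  have h1 : Real.Gamma (x+1) = x * Real.Gamma x := Real.Gamma_add_one hx.ne'
  have h2 : Real.log (x * Real.Gamma x) = Real.log x + Real.log (Real.Gamma x) :=
    Real.log_mul hx.ne' (Real.Gamma_pos_of_pos hx).ne'
  simp only [binetMu, h1, h2]
  ring

lemma tendsto_binetMu_nat : Tendsto (fun n : ℕ => binetMu n) atTop (𝓝 0) := by
  rw [← tendsto_add_atTop_iff_nat 1]
  have hA : Tendsto (fun n : ℕ => Real.log (Stirling.stirlingSeq n)) atTop
      (𝓝 (Real.log π / 2)) := by
    have h0 : Tendsto Stirling.stirlingSeq atTop (𝓝 (Real.sqrt π)) :=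
      Stirling.tendsto_stirlingSeq_sqrt_pi
    have hπ : (0:ℝ) < Real.sqrt π := Real.sqrt_pos.2 Real.pi_pos
    have := (Real.continuousAt_log hπ.ne').tendsto.comp h0
    rwa [Real.log_sqrt Real.pi_pos.le] at this
  have hB : Tendsto (fun n : ℕ => ((n:ℝ)+1/2) * (Real.log ((n:ℝ)+1) - Real.log n) - 1)
      atTop (𝓝 0) := by
    refine squeeze_zero_norm' ?_ (tendsto_one_div_atTop_nhds_zero_nat)
    filter_upwards [eventually_ge_atTop 1] with n hn
    have hn0 : (0:ℝ) < n := by exact_mod_cast hn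
    have hn1 : (0:ℝ) < (n:ℝ) + 1 := by linarith
    have hfrac : (0:ℝ) < ((n:ℝ)+1)/n := by positivity
    have hLdef : Real.log ((n:ℝ)+1) - Real.log n = Real.log (((n:ℝ)+1)/n) :=
      (Real.log_div hn1.ne' hn0.ne').symm
    have hup : Real.log (((n:ℝ)+1)/n) ≤ 1/n := by
      have h := Real.log_le_sub_one_of_pos hfrac
      have h2 : ((n:ℝ)+1)/n - 1 = 1/n := by field_simp; ring
      linarith
    have hlo : 1/((n:ℝ)+1) ≤ Real.log (((n:ℝ)+1)/n) := by
      have h := Real.one_sub_inv_le_log_of_pos hfrac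
      have h2 : 1 - (((n:ℝ)+1)/n)⁻¹ = 1/((n:ℝ)+1) := by
        rw [inv_div]; field_simp; ring
      linarith
    rw [hLdef, Real.norm_eq_abs, abs_le]
    have ha : (n:ℝ)*(1/n) = 1 := by field_simp
    have hb : ((n:ℝ)+1)*(1/((n:ℝ)+1)) = 1 := by field_simp
    have hmul1 : ((n:ℝ)+1/2) * (1/((n:ℝ)+1)) ≤ ((n:ℝ)+1/2) * Real.log (((n:ℝ)+1)/n) :=
      mul_le_mul_of_nonneg_left hlo (by linarith)
    have hmul2 : ((n:ℝ)+1/2) * Real.log (((n:ℝ)+1)/n) ≤ ((n:ℝ)+1/2) * (1/n) :=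
      mul_le_mul_of_nonneg_left hup (by linarith)
    have hab : 1/((n:ℝ)+1) ≤ 1/n := by
      exact one_div_le_one_div_of_le hn0 (by linarith)
    constructor
    · nlinarith
    · nlinarith
  have hid : ∀ n : ℕ, 1 ≤ n → binetMu ((n:ℝ)+1) =
      (Real.log (Stirling.stirlingSeq n) - Real.log π / 2)
        - (((n:ℝ)+1/2) * (Real.log ((n:ℝ)+1) - Real.log n) - 1) := by
    intro n hn
    have hn0 : (0:ℝ) < n := by exact_mod_cast hn
    have hΓ : Real.Gamma ((n:ℝ)+1) = (Nat.factorial n : ℝ) := Real.Gamma_nat_eq_factorial n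
    have hstir := Stirling.log_stirlingSeq_formula n
    have hlog2n : Real.log (2*(n:ℝ)) = Real.log 2 + Real.log n :=
      Real.log_mul two_ne_zero hn0.ne'
    have hlogne : Real.log ((n:ℝ) / Real.exp 1) = Real.log n - 1 := by
      rw [Real.log_div hn0.ne' (Real.exp_ne_zero 1), Real.log_exp]
    have hlog2π : Real.log (2*π) = Real.log 2 + Real.log π :=
      Real.log_mul two_ne_zero Real.pi_pos.ne'
    rw [binetMu, hΓ]
    rw [hlog2n, hlogne] at hstir
    rw [hlog2π]
    rw [show Real.log (Nat.factorial n : ℝ) = Real.log (Stirling.stirlingSeq n)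
        + 1/2*(Real.log 2 + Real.log n) + n*(Real.log n - 1) from by linarith [hstir]]
    ring
  have hfinal : Tendsto (fun n : ℕ => (Real.log (Stirling.stirlingSeq n) - Real.log π / 2)
        - (((n:ℝ)+1/2) * (Real.log ((n:ℝ)+1) - Real.log n) - 1)) atTop (𝓝 0) := by
    have := (hA.sub_const (Real.log π / 2)).sub hB
    simpa using this
  apply hfinal.congr'
  filter_upwards [eventually_ge_atTop 1] with n hn
  rw [show ((n+1:ℕ):ℝ) = (n:ℝ)+1 from by push_cast; ring, hid n hn]

set_option maxHeartbeats 800000 in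
lemma binetMu_interp {n : ℕ} (hn : 2 ≤ n) {t : ℝ} (ht0 : 0 ≤ t) (ht1 : t < 1) :
    |binetMu ((n:ℝ) + t) - binetMu n| ≤ 2 / ((n:ℝ) - 1) := by
  set N : ℝ := (n:ℝ) with hN
  have hN2 : (2:ℝ) ≤ N := by rw [hN]; exact_mod_cast hn
  have hN0 : (0:ℝ) < N := by linarith
  have hNm1 : (0:ℝ) < N - 1 := by linarith
  set x : ℝ := N + t with hx
  have hx0 : (0:ℝ) < x := by rw [hx]; linarith
  have hxN : N ≤ x := by rw [hx]; linarith
  have hxt : x - N = t := by rw [hx]; ring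
  have hconv := Real.convexOn_log_Gamma
  have hfN1 : Real.log (Real.Gamma (N+1)) = Real.log N + Real.log (Real.Gamma N) := by
    rw [Real.Gamma_add_one hN0.ne', Real.log_mul hN0.ne' (Real.Gamma_pos_of_pos hN0).ne']
  have hfN0 : Real.log (Real.Gamma N) = Real.log (N-1) + Real.log (Real.Gamma (N-1)) := by
    have h := Real.Gamma_add_one (s := N - 1) hNm1.ne'
    rw [sub_add_cancel] at h
    rw [h, Real.log_mul hNm1.ne' (Real.Gamma_pos_of_pos hNm1).ne']
  have hup : Real.log (Real.Gamma x) ≤ Real.log (Real.Gamma N) + t * Real.log N := by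
    have h := hconv.2 (mem_Ioi.2 hN0) (mem_Ioi.2 (by linarith : (0:ℝ) < N + 1))
      (by linarith : (0:ℝ) ≤ 1 - t) ht0 (by ring)
    simp only [smul_eq_mul, Function.comp_apply] at h
    have hxx : (1-t) * N + t * (N+1) = x := by rw [hx]; ring
    rw [hxx] at h
    calc Real.log (Real.Gamma x) ≤ (1-t) * Real.log (Real.Gamma N)
          + t * Real.log (Real.Gamma (N+1)) := h
      _ = Real.log (Real.Gamma N) + t * Real.log N := by rw [hfN1]; ring
  have hlo : Real.log (Real.Gamma N) + t * Real.log (N-1) ≤ Real.log (Real.Gamma x) := by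
    rcases eq_or_lt_of_le ht0 with h0 | h0
    · have : x = N := by rw [hx, ← h0, add_zero]
      rw [this, ← h0]; simp
    · have h := hconv.slope_mono_adjacent (mem_Ioi.2 hNm1) (mem_Ioi.2 hx0)
        (by linarith : N - 1 < N) (by rw [hx]; linarith : N < x)
      simp only [Function.comp_apply] at h
      rw [show N - (N-1) = 1 by ring, div_one, hxt] at h
      have h2 : Real.log (N-1) ≤ (Real.log (Real.Gamma x) - Real.log (Real.Gamma N)) / t := by
        calc Real.log (N-1) = Real.log (Real.Gamma N) - Real.log (Real.Gamma (N-1)) := by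
              rw [hfN0]; ring
          _ ≤ _ := h
      rw [le_div_iff₀ h0] at h2
      linarith
  have hlog_up : Real.log x - Real.log N ≤ t / N := by
    have h1 : Real.log x - Real.log N = Real.log (x / N) := (Real.log_div hx0.ne' hN0.ne').symm
    have h2 := Real.log_le_sub_one_of_pos (show (0:ℝ) < x/N by positivity)
    have h3 : x / N - 1 = t / N := by rw [hx]; field_simp; ring
    linarith
  have hlog_lo : t / x ≤ Real.log x - Real.log N := by
    have h1 : Real.log x - Real.log N = Real.log (x / N) := (Real.log_div hx0.ne' hN0.ne').symm
    have h2 := Real.one_sub_inv_le_log_of_pos (show (0:ℝ) < x/N by positivity)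
    have h3 : 1 - (x/N)⁻¹ = t / x := by
      rw [inv_div, hx]; field_simp; ring
    linarith
  have hlogN1 : Real.log N - Real.log (N-1) ≤ 1 / (N-1) := by
    have h1 : Real.log N - Real.log (N-1) = Real.log (N / (N-1)) :=
      (Real.log_div hN0.ne' hNm1.ne').symm
    have h2 := Real.log_le_sub_one_of_pos (show (0:ℝ) < N/(N-1) by positivity)
    have h3 : N / (N-1) - 1 = 1 / (N-1) := by field_simp; ring
    linarith
  have hD : binetMu x - binetMu N = (Real.log (Real.Gamma x) - Real.log (Real.Gamma N))
      - (x - 1/2) * Real.log x + (N - 1/2) * Real.log N + t := by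
    simp only [binetMu, hx]; ring
  have hxL0 : t * Real.log N + (N - 1/2) * Real.log N = (x - 1/2) * Real.log N := by
    rw [hx]; ring
  have e1 : (x - 1/2) * (t/x) ≤ (x - 1/2) * Real.log x - (x - 1/2) * Real.log N := by
    have := mul_le_mul_of_nonneg_left hlog_lo (by linarith : (0:ℝ) ≤ x - 1/2)
    rw [mul_sub] at this; linarith
  have e1' : (x - 1/2) * Real.log x - (x - 1/2) * Real.log N ≤ (x - 1/2) * (t/N) := by
    have := mul_le_mul_of_nonneg_left hlog_up (by linarith : (0:ℝ) ≤ x - 1/2)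
    rw [mul_sub] at this; linarith
  have e2 : t * Real.log N - t * Real.log (N-1) ≤ t * (1/(N-1)) := by
    have := mul_le_mul_of_nonneg_left hlogN1 ht0
    rw [mul_sub] at this; linarith
  have e4 : t - (x - 1/2) * (t/x) ≤ 2/(N-1) := by
    have heq : t - (x - 1/2) * (t/x) = t/(2*x) := by field_simp; ring
    rw [heq, div_le_div_iff₀ (by positivity) hNm1, hx]
    nlinarith
  have e3 : -(2/(N-1)) ≤ -(t*(1/(N-1))) - (x - 1/2) * (t/N) + t := by
    have heq : (-(t*(1/(N-1))) - (x-1/2)*(t/N) + t) + 2/(N-1)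
        = (-(t*N) - (x-1/2)*t*(N-1) + t*N*(N-1) + 2*N) / (N*(N-1)) := by
      rw [hx]; field_simp
    have hnum : (0:ℝ) ≤ -(t*N) - (x-1/2)*t*(N-1) + t*N*(N-1) + 2*N := by
      rw [hx]
      have key : -(t*N) - ((N+t) - 1/2)*t*(N-1) + t*N*(N-1) + 2*N
          = -(t*N) + t*(N-1)*(1/2 - t) + 2*N := by ring
      have hA : t*N ≤ N := by nlinarith
      have hB : -(N-1) ≤ t*(N-1)*(1/2 - t) := by nlinarith [sq_nonneg t, mul_nonneg ht0 hNm1.le]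
      linarith [key, hA, hB]
    have := div_nonneg hnum (by positivity : (0:ℝ) ≤ N*(N-1))
    linarith [heq ▸ this]
  rw [abs_le]
  constructor
  · linarith [hD, hlo, hxL0, e1', e2, e3]
  · linarith [hD, hup, hxL0, e1, e4]

lemma tendsto_binetMu_add_nat {z : ℝ} (hz : 0 < z) :
    Tendsto (fun N : ℕ => binetMu (z + N)) atTop (𝓝 0) := by
  set m : ℕ := ⌊z⌋₊ with hm
  set t : ℝ := z - m with ht
  have ht0 : 0 ≤ t := sub_nonneg.2 (Nat.floor_le hz.le)
  have ht1 : t < 1 := by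
    rw [ht, sub_lt_iff_lt_add']
    exact Nat.lt_floor_add_one z
  have hnat : Tendsto (fun N : ℕ => N + m) atTop atTop := tendsto_add_atTop_nat m
  have h1 : Tendsto (fun N : ℕ => binetMu ((N + m : ℕ):ℝ)) atTop (𝓝 0) :=
    tendsto_binetMu_nat.comp hnat
  have hcast : Tendsto (fun N : ℕ => ((N + m :ℕ):ℝ)) atTop atTop :=
    tendsto_natCast_atTop_atTop.comp hnat
  have h2 : Tendsto (fun N : ℕ => 2 / (((N + m :ℕ):ℝ) - 1)) atTop (𝓝 0) := by
    apply Tendsto.comp ?_ (tendsto_atTop_add_const_right atTop (-1) hcast)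
    exact tendsto_const_nhds.div_atTop tendsto_id
  have key : ∀ N : ℕ, z + (N:ℝ) = ((N + m : ℕ):ℝ) + t := by
    intro N; push_cast [ht]; ring
  have h3 : Tendsto (fun N : ℕ => binetMu (z + N) - binetMu ((N + m :ℕ):ℝ)) atTop (𝓝 0) := by
    apply squeeze_zero_norm' ?_ h2
    filter_upwards [eventually_ge_atTop 2] with N hN
    rw [key N, Real.norm_eq_abs]
    exact binetMu_interp (hN.trans (Nat.le_add_right N m)) ht0 ht1
  have := h3.add h1
  rw [add_zero] at this
  apply this.congr
  intro N; ring

lemma step_hasSum {x : ℝ} (hx : 0 < x) :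
    HasSum (fun m : ℕ => (1/2) * (((m:ℝ)+1) / (((m:ℝ)+3) * ((m:ℝ)+2))) * (1/(x+1))^(m+2))
      (binetMu x - binetMu (x+1)) := by
  have hx1 : (0:ℝ) < x + 1 := by linarith
  have hu0 : (0:ℝ) < 1/(x+1) := by positivity
  have hu1 : 1/(x+1) < 1 := by rw [div_lt_one hx1]; linarith
  have h := aux_hasSum hu0 hu1
  rw [binetMu_step hx]
  convert h using 1
  have e1 : 1/(1/(x+1)) = x + 1 := one_div_one_div (x+1)
  have e2 : -Real.log (1 - 1/(x+1)) = Real.log (x+1) - Real.log x := by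
    rw [show 1 - 1/(x+1) = x/(x+1) from by field_simp; ring, Real.log_div hx.ne' hx1.ne']
    ring
  rw [e1, e2]
  ring

lemma step_nonneg {x : ℝ} (hx : 0 < x) : 0 ≤ binetMu x - binetMu (x+1) := by
  have hx1 : (0:ℝ) < x + 1 := by linarith
  refine hasSum_le (f := fun _ : ℕ => (0:ℝ)) (fun m => ?_) hasSum_zero (step_hasSum hx)
  positivity

lemma step_le {x : ℝ} (hx : 0 < x) :
    binetMu x - binetMu (x+1) ≤ 1/2 * (1/x - 1/(x+1)) := by
  have hx1 : (0:ℝ) < x + 1 := by linarith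
  have hu0 : (0:ℝ) ≤ 1/(x+1) := by positivity
  have hu1 : 1/(x+1) < 1 := by rw [div_lt_one hx1]; linarith
  have hgeo := (hasSum_geometric_of_lt_one hu0 hu1).mul_left ((1/2) * (1/(x+1))^2)
  have hgeo' : HasSum (fun m : ℕ => (1/2) * (1/(x+1))^(m+2))
      ((1/2) * (1/(x+1))^2 * (1 - 1/(x+1))⁻¹) := by
    convert hgeo using 2 with m
    · rfl
    rw [pow_add]; ring
  have hval : (1/2) * (1/(x+1))^2 * (1 - 1/(x+1))⁻¹ = 1/2 * (1/x - 1/(x+1)) := by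
    rw [show 1 - 1/(x+1) = x/(x+1) from by field_simp; ring]
    field_simp
    ring
  rw [hval] at hgeo'
  refine hasSum_le (fun m => ?_) (step_hasSum hx) hgeo'
  have hrat : ((m:ℝ)+1) / (((m:ℝ)+3) * ((m:ℝ)+2)) ≤ 1 := by
    rw [div_le_one (by positivity)]
    nlinarith [Nat.cast_nonneg (α := ℝ) m]
  have hpow : (0:ℝ) ≤ (1/(x+1))^(m+2) := by positivity
  calc (1/2) * (((m:ℝ)+1) / (((m:ℝ)+3) * ((m:ℝ)+2))) * (1/(x+1))^(m+2)
      ≤ (1/2) * 1 * (1/(x+1))^(m+2) := by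
        apply mul_le_mul_of_nonneg_right _ hpow
        apply mul_le_mul_of_nonneg_left hrat (by norm_num)
    _ = (1/2) * (1/(x+1))^(m+2) := by ring

/-- Binet's convergent double series: indices `n, k : ℕ` correspond to `n+1 ≥ 1`
and `k ≥ 0` in the classical indexing. -/
theorem binetMu_double_series (z : ℝ) (hz : 0 < z) :
    binetMu z =
      (1/2) * ∑' n : ℕ,
        ((n : ℝ) + 1) / (((n : ℝ) + 3) * ((n : ℝ) + 2)) *
          ∑' k : ℕ, 1 / (z + (k : ℝ) + 1) ^ (n + 2) := by
  have hzk : ∀ k : ℕ, (0:ℝ) < z + k := fun k => by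
    have : (0:ℝ) ≤ (k:ℝ) := Nat.cast_nonneg k
    linarith
  set G : ℕ → ℝ := fun k => binetMu (z + k) - binetMu (z + k + 1) with hG
  have hGk : ∀ k : ℕ, HasSum
      (fun m : ℕ => (1/2) * (((m:ℝ)+1) / (((m:ℝ)+3) * ((m:ℝ)+2))) * (1/(z+k+1))^(m+2))
      (G k) := fun k => step_hasSum (hzk k)
  have hGnn : ∀ k, 0 ≤ G k := fun k => step_nonneg (hzk k)
  have hsum_range : ∀ n : ℕ, ∑ k ∈ Finset.range n, G k = binetMu z - binetMu (z + n) := by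
    intro n
    have := Finset.sum_range_sub' (fun k : ℕ => binetMu (z + k)) n
    rw [Nat.cast_zero, add_zero] at this
    rw [← this]
    apply Finset.sum_congr rfl
    intro k _
    rw [hG]; push_cast; ring_nf
  have hbound : ∀ n : ℕ, ∑ k ∈ Finset.range n, G k ≤ 1/(2*z) := by
    intro n
    have h1 : ∑ k ∈ Finset.range n, G k
        ≤ ∑ k ∈ Finset.range n, (1/2 * (1/(z+k)) - 1/2 * (1/(z+k+1))) := by
      apply Finset.sum_le_sum
      intro k _
      have := step_le (hzk k)
      linarith
    have h2 := Finset.sum_range_sub' (fun k : ℕ => 1/2 * (1/(z+k))) n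
    rw [Nat.cast_zero, add_zero] at h2
    have h3 : ∑ k ∈ Finset.range n, (1/2 * (1/(z+k)) - 1/2 * (1/(z+k+1)))
        = 1/2 * (1/z) - 1/2 * (1/(z+n)) := by
      rw [← h2]
      apply Finset.sum_congr rfl
      intro k _
      push_cast; ring_nf
    have h4 : (0:ℝ) ≤ 1/2 * (1/(z+n)) := by positivity
    have h5 : 1/2 * (1/z) = 1/(2*z) := by ring
    linarith
  have hSummable : Summable G := summable_of_sum_range_le hGnn hbound
  have hHasSumG : HasSum G (binetMu z) := by
    have ht : Tendsto (fun n : ℕ => ∑ k ∈ Finset.range n, G k) atTop (𝓝 (binetMu z)) := by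
      simp only [hsum_range]
      have := (tendsto_binetMu_add_nat hz).const_sub (binetMu z)
      simpa using this
    have h2 := hSummable.hasSum
    rwa [tendsto_nhds_unique ht h2.tendsto_sum_nat]
  -- double series
  set f : ℕ → ℕ → ℝ := fun k m =>
    (1/2) * (((m:ℝ)+1) / (((m:ℝ)+3) * ((m:ℝ)+2))) * (1/(z+k+1))^(m+2) with hf
  have hfnn : ∀ p : ℕ × ℕ, 0 ≤ Function.uncurry f p := by
    rintro ⟨k, m⟩
    have h1 : (0:ℝ) < z + k + 1 := by linarith [hzk k]
    have : (0:ℝ) ≤ (m:ℝ) := Nat.cast_nonneg m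
    simp only [Function.uncurry, hf]
    positivity
  have hfs : Summable (Function.uncurry f) := by
    rw [summable_prod_of_nonneg hfnn]
    constructor
    · intro k; exact (hGk k).summable
    · apply Summable.congr hSummable
      intro k
      exact ((hGk k).tsum_eq).symm
  have step1 : binetMu z = ∑' (k : ℕ) (m : ℕ), f k m := by
    rw [← hHasSumG.tsum_eq]
    exact tsum_congr fun k => ((hGk k).tsum_eq).symm
  rw [step1, ← hfs.tsum_comm]
  -- now swap done: goal ∑' m k, f k m = (1/2) * ∑' ...
  have step2 : ∀ m : ℕ, ∑' k : ℕ, f k m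
      = (1/2) * ((((m:ℝ)+1) / (((m:ℝ)+3) * ((m:ℝ)+2))) * ∑' k : ℕ, 1/(z + k + 1)^(m+2)) := by
    intro m
    rw [← tsum_mul_left, ← tsum_mul_left]
    apply tsum_congr
    intro k
    simp only [hf]
    rw [one_div_pow]
    ring
  calc ∑' (m : ℕ) (k : ℕ), f k m
      = ∑' m : ℕ, (1/2) * ((((m:ℝ)+1) / (((m:ℝ)+3) * ((m:ℝ)+2)))
          * ∑' k : ℕ, 1/(z + k + 1)^(m+2)) := tsum_congr step2
    _ = (1/2) * ∑' m : ℕ, (((m:ℝ)+1) / (((m:ℝ)+3) * ((m:ℝ)+2)))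
          * ∑' k : ℕ, 1/(z + k + 1)^(m+2) := tsum_mul_left
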